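/- Let T and W be the two coordinate projections under the product P of Gaussian measures N(ν,γ²) and N(μ,σ²) on ℝ×ℝ, and let S = βT + (1−β)W with β ∈ (0,1). Then the conditional expectation of W given the σ-algebra generated by S satisfies, P-almost everywhere, E[W | σ(S)] = μ + ((1−β)σ² / (β²γ² + (1−β)²σ²)) · (S − (βν + (1−β)μ)). -/

import Mathlib

open MeasureTheory ProbabilityTheory Real
open scoped NNReal ENNReal

lemma exp_arg_identity (νm μm γ σ a b c d x y : ℝ)
    (hγ : 0 < γ) (hσ : 0 < σ)
    (hdet : a * d - b * c ≠ 0) (horth : a * c * γ ^ 2 + b * d * σ ^ 2 = 0) :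
    -((d * x - b * y) / (a * d - b * c) - νm) ^ 2 / (2 * γ ^ 2)
      + -((a * y - c * x) / (a * d - b * c) - μm) ^ 2 / (2 * σ ^ 2)
    = -(x - (a * νm + b * μm)) ^ 2 / (2 * (a ^ 2 * γ ^ 2 + b ^ 2 * σ ^ 2))
      + -(y - (c * νm + d * μm)) ^ 2 / (2 * (c ^ 2 * γ ^ 2 + d ^ 2 * σ ^ 2)) := by
  have hab : a ≠ 0 ∨ b ≠ 0 := by
    by_contra hcon
    push_neg at hcon
    simp [hcon.1, hcon.2] at hdet
  have hcd' : c ≠ 0 ∨ d ≠ 0 := by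
    by_contra hcon
    push_neg at hcon
    simp [hcon.1, hcon.2] at hdet
  have h1 : (0:ℝ) < a ^ 2 * γ ^ 2 + b ^ 2 * σ ^ 2 := by
    rcases hab with h | h <;> positivity
  have h2 : (0:ℝ) < c ^ 2 * γ ^ 2 + d ^ 2 * σ ^ 2 := by
    rcases hcd' with h | h <;> positivity
  field_simp [show d * a - b * c ≠ 0 by rwa [mul_comm d a]]
  linear_combination (σ^2*(2*a*c*γ^2-(a*c*γ^2+b*d*σ^2))*(d*x-b*y-(a*d-b*c)*νm)^2
      + γ^2*(2*b*d*σ^2-(a*c*γ^2+b*d*σ^2))*(a*y-c*x-(a*d-b*c)*μm)^2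
    + 2*γ^2*σ^2*(a*d+b*c)*(d*x-b*y-(a*d-b*c)*νm)*(a*y-c*x-(a*d-b*c)*μm)) * horth

lemma density_identity (νm μm γ σ a b c d x y : ℝ)
    (hγ : 0 < γ) (hσ : 0 < σ)
    (hdet : a * d - b * c ≠ 0) (horth : a * c * γ ^ 2 + b * d * σ ^ 2 = 0) :
    |(a * d - b * c)⁻¹| *
      (gaussianPDFReal νm (γ ^ 2).toNNReal ((d * x - b * y) / (a * d - b * c)) *
       gaussianPDFReal μm (σ ^ 2).toNNReal ((a * y - c * x) / (a * d - b * c)))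
    = gaussianPDFReal (a * νm + b * μm) (a ^ 2 * γ ^ 2 + b ^ 2 * σ ^ 2).toNNReal x *
      gaussianPDFReal (c * νm + d * μm) (c ^ 2 * γ ^ 2 + d ^ 2 * σ ^ 2).toNNReal y := by
  have hab : a ≠ 0 ∨ b ≠ 0 := by
    by_contra hcon; push_neg at hcon; simp [hcon.1, hcon.2] at hdet
  have hcd' : c ≠ 0 ∨ d ≠ 0 := by
    by_contra hcon; push_neg at hcon; simp [hcon.1, hcon.2] at hdet
  have h1 : (0:ℝ) < a ^ 2 * γ ^ 2 + b ^ 2 * σ ^ 2 := by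
    rcases hab with h | h <;> positivity
  have h2 : (0:ℝ) < c ^ 2 * γ ^ 2 + d ^ 2 * σ ^ 2 := by
    rcases hcd' with h | h <;> positivity
  have e1 : ((γ ^ 2).toNNReal : ℝ) = γ ^ 2 := Real.coe_toNNReal _ (by positivity)
  have e2 : ((σ ^ 2).toNNReal : ℝ) = σ ^ 2 := Real.coe_toNNReal _ (by positivity)
  have e3 : (((a ^ 2 * γ ^ 2 + b ^ 2 * σ ^ 2).toNNReal : ℝ)) = a ^ 2 * γ ^ 2 + b ^ 2 * σ ^ 2 :=
    Real.coe_toNNReal _ h1.le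
  have e4 : (((c ^ 2 * γ ^ 2 + d ^ 2 * σ ^ 2).toNNReal : ℝ)) = c ^ 2 * γ ^ 2 + d ^ 2 * σ ^ 2 :=
    Real.coe_toNNReal _ h2.le
  simp only [gaussianPDFReal, e1, e2, e3, e4]
  have hsqrt : √(2 * π * (a ^ 2 * γ ^ 2 + b ^ 2 * σ ^ 2)) *
      √(2 * π * (c ^ 2 * γ ^ 2 + d ^ 2 * σ ^ 2))
      = |a * d - b * c| * (√(2 * π * γ ^ 2) * √(2 * π * σ ^ 2)) := by
    rw [← Real.sqrt_sq_eq_abs, ← Real.sqrt_mul (by positivity), ← Real.sqrt_mul (by positivity),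
      ← Real.sqrt_mul (by positivity)]
    congr 1
    linear_combination (4 * π ^ 2 * (a * c * γ ^ 2 + b * d * σ ^ 2)) * horth
  have hpos1 : (0:ℝ) < √(2 * π * γ ^ 2) := Real.sqrt_pos.mpr (by positivity)
  have hpos2 : (0:ℝ) < √(2 * π * σ ^ 2) := Real.sqrt_pos.mpr (by positivity)
  have hpos3 : (0:ℝ) < √(2 * π * (a ^ 2 * γ ^ 2 + b ^ 2 * σ ^ 2)) := Real.sqrt_pos.mpr (by positivity)
  have hpos4 : (0:ℝ) < √(2 * π * (c ^ 2 * γ ^ 2 + d ^ 2 * σ ^ 2)) := Real.sqrt_pos.mpr (by positivity)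
  have hexp := exp_arg_identity νm μm γ σ a b c d x y hγ hσ hdet horth
  calc |(a * d - b * c)⁻¹| *
      ((√(2 * π * γ ^ 2))⁻¹ * rexp (-((d * x - b * y) / (a * d - b * c) - νm) ^ 2 / (2 * γ ^ 2)) *
       ((√(2 * π * σ ^ 2))⁻¹ * rexp (-((a * y - c * x) / (a * d - b * c) - μm) ^ 2 / (2 * σ ^ 2))))
      = (|a * d - b * c| * (√(2 * π * γ ^ 2) * √(2 * π * σ ^ 2)))⁻¹ *
        rexp (-((d * x - b * y) / (a * d - b * c) - νm) ^ 2 / (2 * γ ^ 2)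
          + -((a * y - c * x) / (a * d - b * c) - μm) ^ 2 / (2 * σ ^ 2)) := by
        rw [Real.exp_add, abs_inv]
        ring
    _ = (√(2 * π * (a ^ 2 * γ ^ 2 + b ^ 2 * σ ^ 2)) *
          √(2 * π * (c ^ 2 * γ ^ 2 + d ^ 2 * σ ^ 2)))⁻¹ *
        rexp (-(x - (a * νm + b * μm)) ^ 2 / (2 * (a ^ 2 * γ ^ 2 + b ^ 2 * σ ^ 2))
          + -(y - (c * νm + d * μm)) ^ 2 / (2 * (c ^ 2 * γ ^ 2 + d ^ 2 * σ ^ 2))) := by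
        rw [hsqrt, hexp]
    _ = _ := by rw [Real.exp_add]; ring

lemma gauss_prod_withDensity' (m₁ m₂ : ℝ) (v₁ v₂ : ℝ≥0) (h₁ : v₁ ≠ 0) (h₂ : v₂ ≠ 0) :
    (gaussianReal m₁ v₁).prod (gaussianReal m₂ v₂)
      = (volume : Measure (ℝ × ℝ)).withDensity
          (fun p => gaussianPDF m₁ v₁ p.1 * gaussianPDF m₂ v₂ p.2) := by
  refine Measure.prod_eq (fun s t hs ht => ?_)
  rw [withDensity_apply _ (hs.prod ht), Measure.volume_eq_prod, ← Measure.prod_restrict,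
    lintegral_prod_mul ((measurable_gaussianPDF _ _).aemeasurable)
      ((measurable_gaussianPDF _ _).aemeasurable),
    gaussianReal_of_var_ne_zero _ h₁, gaussianReal_of_var_ne_zero _ h₂,
    withDensity_apply _ hs, withDensity_apply _ ht]

lemma map_withDensity_mequiv {μ : Measure (ℝ × ℝ)} (e : (ℝ × ℝ) ≃ᵐ (ℝ × ℝ))
    (F : ℝ × ℝ → ℝ≥0∞) :
    (μ.withDensity F).map e = (μ.map e).withDensity (fun x => F (e.symm x)) := by
  refine Measure.ext (fun A hA => ?_)
  rw [Measure.map_apply e.measurable hA, withDensity_apply _ (e.measurable hA),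
    withDensity_apply _ hA, Measure.restrict_map e.measurable hA,
    e.measurableEmbedding.lintegral_map]
  refine lintegral_congr (fun x => ?_)
  simp

lemma map_linear_gauss (νm μm γ σ : ℝ) (hγ : 0 < γ) (hσ : 0 < σ) (a b c d : ℝ)
    (hdet : a * d - b * c ≠ 0) (horth : a * c * γ ^ 2 + b * d * σ ^ 2 = 0) :
    ((gaussianReal νm (γ ^ 2).toNNReal).prod (gaussianReal μm (σ ^ 2).toNNReal)).map
        (fun p : ℝ × ℝ => (a * p.1 + b * p.2, c * p.1 + d * p.2))
      = (gaussianReal (a * νm + b * μm) (a ^ 2 * γ ^ 2 + b ^ 2 * σ ^ 2).toNNReal).prod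
          (gaussianReal (c * νm + d * μm) (c ^ 2 * γ ^ 2 + d ^ 2 * σ ^ 2).toNNReal) := by
  have hab : a ≠ 0 ∨ b ≠ 0 := by
    by_contra hcon; push_neg at hcon; simp [hcon.1, hcon.2] at hdet
  have hcd' : c ≠ 0 ∨ d ≠ 0 := by
    by_contra hcon; push_neg at hcon; simp [hcon.1, hcon.2] at hdet
  have h1 : (0:ℝ) < a ^ 2 * γ ^ 2 + b ^ 2 * σ ^ 2 := by
    rcases hab with h | h <;> positivity
  have h2 : (0:ℝ) < c ^ 2 * γ ^ 2 + d ^ 2 * σ ^ 2 := by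
    rcases hcd' with h | h <;> positivity
  have hv1 : (γ ^ 2).toNNReal ≠ 0 := fun h =>
    absurd (Real.toNNReal_eq_zero.mp h) (not_le.mpr (by positivity))
  have hv2 : (σ ^ 2).toNNReal ≠ 0 := fun h =>
    absurd (Real.toNNReal_eq_zero.mp h) (not_le.mpr (by positivity))
  have hv3 : (a ^ 2 * γ ^ 2 + b ^ 2 * σ ^ 2).toNNReal ≠ 0 := fun h =>
    absurd (Real.toNNReal_eq_zero.mp h) (not_le.mpr h1)
  have hv4 : (c ^ 2 * γ ^ 2 + d ^ 2 * σ ^ 2).toNNReal ≠ 0 := fun h =>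
    absurd (Real.toNNReal_eq_zero.mp h) (not_le.mpr h2)
  set f : (ℝ × ℝ) →ₗ[ℝ] (ℝ × ℝ) :=
    Matrix.toLin (Module.Basis.finTwoProd ℝ) (Module.Basis.finTwoProd ℝ) !![a, b; c, d] with hf
  have hfdet : LinearMap.det f = a * d - b * c := by
    rw [hf, ← LinearMap.det_toMatrix (Module.Basis.finTwoProd ℝ), LinearMap.toMatrix_toLin]
    simp [Matrix.det_fin_two_of]
  have hfapp : ∀ p : ℝ × ℝ, f p = (a * p.1 + b * p.2, c * p.1 + d * p.2) := fun p =>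
    Matrix.toLin_finTwoProd_apply a b c d p
  set e : (ℝ × ℝ) ≃ₗ[ℝ] (ℝ × ℝ) := f.equivOfDetNeZero (hfdet ▸ hdet) with hedef
  have heapp : ∀ p : ℝ × ℝ, e p = (a * p.1 + b * p.2, c * p.1 + d * p.2) := by
    intro p
    have : (e : (ℝ × ℝ) →ₗ[ℝ] (ℝ × ℝ)) = f := LinearEquiv.coe_ofIsUnitDet _
    calc e p = ((e : (ℝ × ℝ) →ₗ[ℝ] (ℝ × ℝ)) : (ℝ × ℝ) → (ℝ × ℝ)) p := rfl
      _ = f p := by rw [this]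
      _ = _ := hfapp p
  set mE : (ℝ × ℝ) ≃ᵐ (ℝ × ℝ) :=
    e.toContinuousLinearEquiv.toHomeomorph.toMeasurableEquiv with hmE
  have hmEapp : ∀ p : ℝ × ℝ, mE p = (a * p.1 + b * p.2, c * p.1 + d * p.2) := heapp
  have hsymm : ∀ x : ℝ × ℝ, mE.symm x
      = ((d * x.1 - b * x.2) / (a * d - b * c), (a * x.2 - c * x.1) / (a * d - b * c)) := by
    intro x
    have key : mE (((d * x.1 - b * x.2) / (a * d - b * c),
        (a * x.2 - c * x.1) / (a * d - b * c)) : ℝ × ℝ) = x := by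
      rw [hmEapp]
      refine Prod.ext ?_ ?_ <;> · simp only; rw [mul_div_assoc', mul_div_assoc', ← add_div, div_eq_iff hdet]; ring
    have := congrArg mE.symm key
    rw [MeasurableEquiv.symm_apply_apply] at this
    exact this.symm
  have hfun : (fun p : ℝ × ℝ => (a * p.1 + b * p.2, c * p.1 + d * p.2)) = ⇑mE := by
    funext p; exact (hmEapp p).symm
  have hcoef : ⇑mE = ⇑f := by funext p; rw [hmEapp p, hfapp p]
  rw [gauss_prod_withDensity' νm μm _ _ hv1 hv2, hfun, map_withDensity_mequiv mE,
    gauss_prod_withDensity' _ _ _ _ hv3 hv4]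
  have hmap : (volume : Measure (ℝ × ℝ)).map mE
      = ENNReal.ofReal |(a * d - b * c)⁻¹| • volume := by
    rw [hcoef, Measure.map_linearMap_addHaar_eq_smul_addHaar volume (by rw [hfdet]; exact hdet),
      hfdet]
  rw [hmap, withDensity_smul_measure]
  have hmeasG : Measurable (fun x : ℝ × ℝ =>
      gaussianPDF νm (γ ^ 2).toNNReal (mE.symm x).1 * gaussianPDF μm (σ ^ 2).toNNReal (mE.symm x).2) :=
    (((measurable_gaussianPDF _ _).comp (measurable_fst.comp mE.symm.measurable)).mul
      ((measurable_gaussianPDF _ _).comp (measurable_snd.comp mE.symm.measurable)))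
  rw [← withDensity_smul _ hmeasG]
  congr 1
  funext p
  simp only [Pi.smul_apply, smul_eq_mul, hsymm p]
  simp only [gaussianPDF]
  rw [← ENNReal.ofReal_mul (gaussianPDFReal_nonneg _ _ _),
    ← ENNReal.ofReal_mul (abs_nonneg _), ← ENNReal.ofReal_mul (gaussianPDFReal_nonneg _ _ _)]
  · rw [density_identity νm μm γ σ a b c d p.1 p.2 hγ hσ hdet horth]

lemma integrable_id_gaussianReal (m : ℝ) (v : ℝ≥0) : Integrable id (gaussianReal m v) := by
  rcases eq_or_ne v 0 with hv | hv
  · rw [hv, gaussianReal_zero_var]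
    refine (integrable_const m).congr ?_
    have : ae (Measure.dirac m) = pure m := ae_dirac_eq m
    rw [Filter.EventuallyEq, this]
    simp
  · have hvpos : (0:ℝ) < (v:ℝ) := NNReal.coe_pos.mpr (pos_iff_ne_zero.mpr hv)
    have hb : (0:ℝ) < (2 * (v:ℝ))⁻¹ := by positivity
    rw [gaussianReal_of_var_ne_zero _ hv,
      integrable_withDensity_iff (measurable_gaussianPDF _ _)
        (ae_of_all _ fun x => ENNReal.ofReal_lt_top)]
    have base : Integrable (fun y : ℝ =>
        (√(2 * π * (v:ℝ)))⁻¹ * (y * rexp (-(2 * (v:ℝ))⁻¹ * y ^ 2)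
          + m * rexp (-(2 * (v:ℝ))⁻¹ * y ^ 2))) volume :=
      ((integrable_mul_exp_neg_mul_sq hb).add
        ((integrable_exp_neg_mul_sq hb).const_mul m)).const_mul _
    refine (base.comp_sub_right m).congr (ae_of_all _ fun x => ?_)
    have hexp : rexp (-(2 * (v:ℝ))⁻¹ * (x - m) ^ 2) = rexp (-(x - m) ^ 2 / (2 * (v:ℝ))) := by
      congr 1; field_simp
    simp only
    rw [id_eq, gaussianPDF, ENNReal.toReal_ofReal (gaussianPDFReal_nonneg _ _ _)]
    simp only [gaussianPDFReal]
    rw [← hexp]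
    ring

lemma integral_id_gaussianReal (m : ℝ) (v : ℝ≥0) : ∫ x, x ∂(gaussianReal m v) = m := by
  have h0 : ∫ x, x ∂(gaussianReal 0 v) = 0 := by
    have hone : (⟨(-1:ℝ) ^ 2, sq_nonneg _⟩ : ℝ≥0) = 1 := by ext; norm_num
    have hmap : Measure.map (fun x => (-1:ℝ) * x) (gaussianReal 0 v) = gaussianReal 0 v := by
      rw [gaussianReal_map_const_mul (-1 : ℝ), mul_zero]; congr 1; ext; simp
    have := integral_map (μ := gaussianReal 0 v) (φ := fun x => (-1:ℝ) * x)
      ((measurable_id.const_mul _).aemeasurable)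
      (f := fun x => x) (by rw [hmap]; exact aestronglyMeasurable_id)
    rw [hmap] at this
    have h2 : ∫ x, x ∂(gaussianReal 0 v) = -∫ x, x ∂(gaussianReal 0 v) := by
      nth_rewrite 1 [this]
      simp only [neg_one_mul]
      exact integral_neg _
    linarith
  have hmap2 : Measure.map (fun x => x + m) (gaussianReal 0 v) = gaussianReal m v := by
    rw [gaussianReal_map_add_const m, zero_add]
  rw [← hmap2, integral_map (φ := fun x : ℝ => x + m) ((measurable_id.add_const _).aemeasurable)
    (f := fun x : ℝ => x) (by rw [hmap2]; exact aestronglyMeasurable_id)]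
  have hint : Integrable (fun x : ℝ => x) (gaussianReal 0 v) := integrable_id_gaussianReal 0 v
  rw [integral_add hint (integrable_const m), h0, integral_const]
  simp

/-- conditional expectation of wealth `W` given the σ-algebra generated by the
score `S = βT + (1-β)W`, where `T, W` are the coordinates under the product of Gaussians. -/
theorem condexp_wealth_given_score
    (ν μ γ σ : ℝ) (hγ : 0 < γ) (hσ : 0 < σ) (β : ℝ) (hβ : β ∈ Set.Ioo (0 : ℝ) 1)
    (P : Measure (ℝ × ℝ))
    (hP : P = (gaussianReal ν (γ ^ 2).toNNReal).prod (gaussianReal μ (σ ^ 2).toNNReal))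
    (T W S : ℝ × ℝ → ℝ)
    (hT : T = fun p => p.1) (hW : W = fun p => p.2)
    (hS : S = fun p => β * T p + (1 - β) * W p) :
    P[W | MeasurableSpace.comap S Real.measurableSpace]
      =ᵐ[P] fun p =>
        μ + ((1 - β) * σ ^ 2 / (β ^ 2 * γ ^ 2 + (1 - β) ^ 2 * σ ^ 2))
          * (S p - (β * ν + (1 - β) * μ)) := by
  obtain ⟨hβ0, hβ1⟩ := hβ
  have h1β : (0:ℝ) < 1 - β := by linarith
  subst hT hW
  subst hS hP
  set v : ℝ := β ^ 2 * γ ^ 2 + (1 - β) ^ 2 * σ ^ 2 with hvdef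
  have hv : 0 < v := by
    have h1 := mul_pos (pow_pos hβ0 2) (pow_pos hγ 2)
    have h2 := mul_pos (pow_pos h1β 2) (pow_pos hσ 2)
    rw [hvdef]; linarith
  set a : ℝ := (1 - β) * σ ^ 2 / v with hadef
  set Pm : Measure (ℝ × ℝ) :=
    (gaussianReal ν (γ ^ 2).toNNReal).prod (gaussianReal μ (σ ^ 2).toNNReal) with hPm
  have hdet : -(a * β) * (1 - β) - (1 - (1 - β) * a) * β ≠ 0 := by
    have : -(a * β) * (1 - β) - (1 - (1 - β) * a) * β = -β := by ring
    rw [this]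
    exact neg_ne_zero.mpr (ne_of_gt hβ0)
  have horth : -(a * β) * β * γ ^ 2 + (1 - (1 - β) * a) * (1 - β) * σ ^ 2 = 0 := by
    rw [hadef, hvdef]
    field_simp
    ring
  have hjoint := map_linear_gauss ν μ γ σ hγ hσ (-(a * β)) (1 - (1 - β) * a) β (1 - β) hdet horth
  have hSm : Measurable (fun p : ℝ × ℝ => β * p.1 + (1 - β) * p.2) :=
    (measurable_fst.const_mul β).add (measurable_snd.const_mul (1 - β))
  have hRm : Measurable (fun p : ℝ × ℝ => -(a * β) * p.1 + (1 - (1 - β) * a) * p.2) :=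
    (measurable_fst.const_mul _).add (measurable_snd.const_mul _)
  have hpair : Measurable (fun p : ℝ × ℝ =>
      (-(a * β) * p.1 + (1 - (1 - β) * a) * p.2, β * p.1 + (1 - β) * p.2)) :=
    hRm.prodMk hSm
  have hmapS : Pm.map (fun p : ℝ × ℝ => β * p.1 + (1 - β) * p.2)
      = gaussianReal (β * ν + (1 - β) * μ) (β ^ 2 * γ ^ 2 + (1 - β) ^ 2 * σ ^ 2).toNNReal := by
    have h := congrArg Measure.snd hjoint
    rw [Measure.snd_prod] at h
    rw [Measure.snd, Measure.map_map measurable_snd hpair] at h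
    exact h
  have hmapR : Pm.map (fun p : ℝ × ℝ => -(a * β) * p.1 + (1 - (1 - β) * a) * p.2)
      = gaussianReal (-(a * β) * ν + (1 - (1 - β) * a) * μ)
          ((-(a * β)) ^ 2 * γ ^ 2 + (1 - (1 - β) * a) ^ 2 * σ ^ 2).toNNReal := by
    have h := congrArg Measure.fst hjoint
    rw [Measure.fst_prod] at h
    rw [Measure.fst, Measure.map_map measurable_fst hpair] at h
    exact h
  have hindep : IndepFun (fun p : ℝ × ℝ => -(a * β) * p.1 + (1 - (1 - β) * a) * p.2)
      (fun p : ℝ × ℝ => β * p.1 + (1 - β) * p.2) Pm := by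
    rw [indepFun_iff_map_prod_eq_prod_map_map hRm.aemeasurable hSm.aemeasurable,
      hmapR, hmapS]
    exact hjoint
  have hintS : Integrable (fun p : ℝ × ℝ => β * p.1 + (1 - β) * p.2) Pm := by
    have h := integrable_id_gaussianReal (β * ν + (1 - β) * μ)
      (β ^ 2 * γ ^ 2 + (1 - β) ^ 2 * σ ^ 2).toNNReal
    rw [← hmapS] at h
    exact (integrable_map_measure aestronglyMeasurable_id hSm.aemeasurable).mp h
  have hintR : Integrable (fun p : ℝ × ℝ => -(a * β) * p.1 + (1 - (1 - β) * a) * p.2) Pm := by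
    have h := integrable_id_gaussianReal (-(a * β) * ν + (1 - (1 - β) * a) * μ)
      ((-(a * β)) ^ 2 * γ ^ 2 + (1 - (1 - β) * a) ^ 2 * σ ^ 2).toNNReal
    rw [← hmapR] at h
    exact (integrable_map_measure aestronglyMeasurable_id hRm.aemeasurable).mp h
  set mS : MeasurableSpace (ℝ × ℝ) :=
    MeasurableSpace.comap (fun p : ℝ × ℝ => β * p.1 + (1 - β) * p.2) Real.measurableSpace
    with hmSdef
  have hmS_le : mS ≤ Prod.instMeasurableSpace := hSm.comap_le
  haveI : IsFiniteMeasure (Pm.trim hmS_le) := isFiniteMeasure_trim hmS_le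
  have hintaS : Integrable (fun p : ℝ × ℝ => a * (β * p.1 + (1 - β) * p.2)) Pm :=
    hintS.const_mul a
  have hWsum : (fun p : ℝ × ℝ => p.2)
      = (fun p : ℝ × ℝ => a * (β * p.1 + (1 - β) * p.2))
        + (fun p : ℝ × ℝ => -(a * β) * p.1 + (1 - (1 - β) * a) * p.2) := by
    funext p
    simp only [Pi.add_apply]
    ring
  have hSmS : Measurable[mS] (fun p : ℝ × ℝ => β * p.1 + (1 - β) * p.2) :=
    measurable_iff_comap_le.mpr le_rfl
  have hA : Pm[(fun p : ℝ × ℝ => a * (β * p.1 + (1 - β) * p.2))|mS]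
      = fun p : ℝ × ℝ => a * (β * p.1 + (1 - β) * p.2) :=
    condExp_of_stronglyMeasurable hmS_le ((hSmS.const_mul a).stronglyMeasurable) hintaS
  have hRsm : StronglyMeasurable[MeasurableSpace.comap
      (fun p : ℝ × ℝ => -(a * β) * p.1 + (1 - (1 - β) * a) * p.2) Real.measurableSpace]
      (fun p : ℝ × ℝ => -(a * β) * p.1 + (1 - (1 - β) * a) * p.2) :=
    (measurable_iff_comap_le.mpr le_rfl).stronglyMeasurable
  have hB : Pm[(fun p : ℝ × ℝ => -(a * β) * p.1 + (1 - (1 - β) * a) * p.2)|mS]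
      =ᵐ[Pm] fun _ => ∫ p, (-(a * β) * p.1 + (1 - (1 - β) * a) * p.2) ∂Pm :=
    condExp_indep_eq hRm.comap_le hmS_le hRsm hindep
  have hmean : ∫ p, (-(a * β) * p.1 + (1 - (1 - β) * a) * p.2) ∂Pm
      = -(a * β) * ν + (1 - (1 - β) * a) * μ := by
    have h2 := integral_map (μ := Pm) hRm.aemeasurable (f := fun x : ℝ => x)
      measurable_id.aestronglyMeasurable
    rw [hmapR, _root_.integral_id_gaussianReal] at h2
    exact h2.symm
  calc Pm[(fun p : ℝ × ℝ => p.2)|mS]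
      =ᵐ[Pm] Pm[(fun p : ℝ × ℝ => a * (β * p.1 + (1 - β) * p.2))|mS]
        + Pm[(fun p : ℝ × ℝ => -(a * β) * p.1 + (1 - (1 - β) * a) * p.2)|mS] := by
        rw [hWsum]
        exact condExp_add hintaS hintR mS
    _ =ᵐ[Pm] (fun p : ℝ × ℝ => a * (β * p.1 + (1 - β) * p.2))
        + fun _ => -(a * β) * ν + (1 - (1 - β) * a) * μ := by
        rw [hA]
        exact Filter.EventuallyEq.add Filter.EventuallyEq.rfl (hB.trans (by rw [hmean]))
    _ = fun p : ℝ × ℝ => μ + a * ((β * p.1 + (1 - β) * p.2) - (β * ν + (1 - β) * μ)) := by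
        funext p
        simp only [Pi.add_apply]
        ring
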